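/- Fix c > 0. For x₁ > 1, define Z₂(t,x,y) = (t/x₁²)·(t² + (x₁-y₁)/x₁ + |y'|²)^{-(n+4)/2}·exp(-c(t²+|y'|²)x₁/(x₁-y₁)) for y = (y₁,y') with x₁/2 ≤ y₁ < x₁, and 0 otherwise. Then ∫_{R^n} Z₂(t,x,y) dy ≤ C·t^{-2}·x₁^{-1} for all t > 0, with C depending only on n and c. -/

import Mathlib

open Real MeasureTheory

lemma gauss_int (m : ℕ) {b : ℝ} (hb : 0 < b) :
    Integrable (fun v : EuclideanSpace ℝ (Fin m) => Real.exp (-b * ‖v‖ ^ 2)) := by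
  have h := (GaussianFourier.integrable_cexp_neg_mul_sq_norm_add (V := EuclideanSpace ℝ (Fin m))
      (b := (b : ℂ)) (by simpa using hb) 0 0).norm
  refine h.congr (Filter.Eventually.of_forall fun v => ?_)
  simp [Complex.norm_exp, ← Complex.ofReal_pow]

lemma gauss_lint (m : ℕ) {b : ℝ} (hb : 0 < b) :
    ∫⁻ v : EuclideanSpace ℝ (Fin m), ENNReal.ofReal (Real.exp (-b * ‖v‖ ^ 2)) =
      ENNReal.ofReal ((π / b) ^ ((m : ℝ) / 2)) := by
  rw [← ofReal_integral_eq_lintegral_ofReal (gauss_int m hb)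
    (Filter.Eventually.of_forall fun v => Real.exp_nonneg _),
    GaussianFourier.integral_rexp_neg_mul_sq_norm hb]
  congr
  simp

lemma piece1 {x₁ t : ℝ} (hx : 0 < x₁) (ht : 0 < t) :
    ∫⁻ y in Set.Ico (x₁/2) (x₁*(1-t^2)), ENNReal.ofReal (((x₁-y)/x₁) ^ (-(5:ℝ)/2))
      ≤ ENNReal.ofReal ((2/3) * x₁ * t ^ (-(3:ℝ))) := by
  set a := x₁*(1-t^2) with ha
  by_cases hcase : a ≤ x₁/2
  · rw [Set.Ico_eq_empty (by simpa using hcase), Measure.restrict_empty, lintegral_zero_measure]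
    exact zero_le
  push_neg at hcase
  have ht2 : 0 < x₁ * t^2 := by positivity
  have hax : a < x₁ := by rw [ha]; nlinarith
  have hbase : ∀ y ∈ Set.Icc (x₁/2) a, 0 < (x₁ - y)/x₁ := fun y hy =>
    div_pos (by linarith [hy.2]) hx
  have hcont : ContinuousOn (fun y => ((x₁-y)/x₁) ^ (-(5:ℝ)/2)) (Set.Icc (x₁/2) a) := by
    apply ContinuousOn.rpow_const
    · fun_prop
    · exact fun y hy => Or.inl (ne_of_gt (hbase y hy))
  have hIntOn : IntegrableOn (fun y => ((x₁-y)/x₁) ^ (-(5:ℝ)/2)) (Set.Ico (x₁/2) a) :=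
    (hcont.integrableOn_compact isCompact_Icc).mono_set Set.Ico_subset_Icc_self
  rw [← ofReal_integral_eq_lintegral_ofReal hIntOn
    (ae_restrict_of_forall_mem measurableSet_Ico fun y hy =>
      Real.rpow_nonneg (hbase y (Set.Ico_subset_Icc_self hy)).le _)]
  apply ENNReal.ofReal_le_ofReal
  have h1 : ∫ y in Set.Ico (x₁/2) a, ((x₁-y)/x₁) ^ (-(5:ℝ)/2)
      = ∫ y in (x₁/2)..a, ((x₁-y)/x₁) ^ (-(5:ℝ)/2) := by
    rw [intervalIntegral.integral_of_le hcase.le, integral_Ico_eq_integral_Ioo,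
      integral_Ioc_eq_integral_Ioo]
  rw [h1]
  have hderiv : ∀ y ∈ Set.uIcc (x₁/2) a,
      HasDerivAt (fun y => (2/3) * x₁ * ((x₁-y)/x₁) ^ (-(3:ℝ)/2)) (((x₁-y)/x₁) ^ (-(5:ℝ)/2)) y := by
    intro y hy
    rw [Set.uIcc_of_le hcase.le] at hy
    have hb := hbase y hy
    have h0 : HasDerivAt (fun y => (x₁-y)/x₁) (-1/x₁) y := by
      simpa using (((hasDerivAt_id y).const_sub x₁).div_const x₁)
    have h2 := (h0.rpow_const (p := -(3:ℝ)/2) (Or.inl hb.ne')).const_mul ((2/3) * x₁)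
    refine h2.congr_deriv ?_
    have h3 : (-(3:ℝ)/2 - 1) = -(5:ℝ)/2 := by norm_num
    rw [h3]
    field_simp
  have hii : IntervalIntegrable (fun y => ((x₁-y)/x₁) ^ (-(5:ℝ)/2)) volume (x₁/2) a := by
    rw [intervalIntegrable_iff_integrableOn_Ico_of_le hcase.le]
    exact hIntOn
  rw [intervalIntegral.integral_eq_sub_of_hasDerivAt hderiv hii]
  have hxa : (x₁ - a)/x₁ = t^2 := by field_simp [ha]; ring
  have hhalf : (x₁ - x₁/2)/x₁ = 1/2 := by field_simp; ring
  have h3 : (t^2 : ℝ) ^ (-(3:ℝ)/2) = t ^ (-(3:ℝ)) := by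
    rw [← Real.rpow_natCast t 2, ← Real.rpow_mul ht.le]
    norm_num
  rw [hxa, hhalf, h3]
  have h4 : 0 ≤ (2/3) * x₁ * ((1:ℝ)/2) ^ (-(3:ℝ)/2) := by positivity
  linarith

set_option maxHeartbeats 1000000 in
/-- with `n = m + 1 ≥ 1` and `y = (y₁, y') ∈ ℝ × ℝ^{n-1}`. -/
theorem stmt_9 (m : ℕ) (c : ℝ) (hc : 0 < c) :
    ∃ C > 0, ∀ x₁ : ℝ, 1 < x₁ → ∀ t : ℝ, 0 < t →
      ∫ y : ℝ × EuclideanSpace ℝ (Fin m),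
          (if x₁ / 2 ≤ y.1 ∧ y.1 < x₁ then
            (t / x₁ ^ 2) * (t ^ 2 + (x₁ - y.1) / x₁ + ‖y.2‖ ^ 2) ^ (-((m : ℝ) + 5) / 2)
              * Real.exp (-c * (t ^ 2 + ‖y.2‖ ^ 2) * x₁ / (x₁ - y.1))
          else 0)
        ≤ C * t ^ (-2 : ℝ) * x₁⁻¹ := by
  refine ⟨2 * (π / c) ^ ((m : ℝ) / 2), by positivity, ?_⟩
  intro x₁ hx₁ t ht
  have hx : 0 < x₁ := by linarith
  set K := (π / c) ^ ((m : ℝ) / 2) with hK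
  have hK0 : 0 < K := by positivity
  set F : ℝ × EuclideanSpace ℝ (Fin m) → ℝ := fun y =>
    if x₁ / 2 ≤ y.1 ∧ y.1 < x₁ then
      (t / x₁ ^ 2) * (t ^ 2 + (x₁ - y.1) / x₁ + ‖y.2‖ ^ 2) ^ (-((m : ℝ) + 5) / 2)
        * Real.exp (-c * (t ^ 2 + ‖y.2‖ ^ 2) * x₁ / (x₁ - y.1))
    else 0 with hF
  have hF0 : ∀ y, 0 ≤ F y := by
    intro y
    rw [hF]
    dsimp only
    split
    · next h =>
      have hu : 0 ≤ (x₁ - y.1)/x₁ := div_nonneg (by linarith [h.2]) hx.le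
      have hb : 0 ≤ t^2 + (x₁ - y.1)/x₁ + ‖y.2‖^2 := by positivity
      exact mul_nonneg (mul_nonneg (by positivity) (Real.rpow_nonneg hb _)) (Real.exp_nonneg _)
    · exact le_rfl
  have hFmeas : Measurable F := by
    apply Measurable.ite
    · exact measurable_fst measurableSet_Ico
    · refine (measurable_const.mul (Measurable.pow ?_ measurable_const)).mul (Measurable.exp ?_)
      · fun_prop
      · fun_prop
    · exact measurable_const
  by_cases hint : Integrable F
  swap
  · rw [integral_undef hint]
    positivity
  rw [integral_eq_lintegral_of_nonneg_ae (Filter.Eventually.of_forall hF0)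
    hint.aestronglyMeasurable]
  refine ENNReal.toReal_le_of_le_ofReal (by positivity) ?_
  rw [Measure.volume_eq_prod, lintegral_prod (fun z => ENNReal.ofReal (F z)) (ENNReal.measurable_ofReal.comp hFmeas).aemeasurable]
  -- inner bound
  have hinner : ∀ y₁ ∈ Set.Ico (x₁/2) x₁,
      (∫⁻ y' : EuclideanSpace ℝ (Fin m), ENNReal.ofReal (F (y₁, y')))
        ≤ ENNReal.ofReal (K * (t / x₁ ^ 2) * (t ^ 2 + (x₁ - y₁) / x₁) ^ (-(5:ℝ)/2)
            * Real.exp (-(c * t ^ 2 / ((x₁ - y₁) / x₁)))) := by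
    intro y₁ hy₁
    obtain ⟨h1, h2⟩ := hy₁
    set u := (x₁ - y₁) / x₁ with hu
    have hxy : 0 < x₁ - y₁ := by linarith
    have hu0 : 0 < u := div_pos hxy hx
    set A := (t / x₁ ^ 2) * (t ^ 2 + u) ^ (-(5:ℝ)/2) * u ^ (-(m:ℝ)/2)
        * Real.exp (-(c * t ^ 2 / u)) with hA
    have hA0 : 0 ≤ A := by positivity
    have hptw : ∀ y' : EuclideanSpace ℝ (Fin m),
        F (y₁, y') ≤ A * Real.exp (-(c / u) * ‖y'‖ ^ 2) := by
      intro y'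
      rw [hF]
      dsimp only
      rw [if_pos ⟨h1, h2⟩]
      have hexp : -c * (t ^ 2 + ‖y'‖ ^ 2) * x₁ / (x₁ - y₁)
          = -(c * t ^ 2 / u) + -(c / u) * ‖y'‖ ^ 2 := by
        rw [hu]; field_simp; ring
      have hB : 0 < t ^ 2 + u + ‖y'‖ ^ 2 := by positivity
      have hsplit : (t ^ 2 + u + ‖y'‖ ^ 2) ^ (-((m : ℝ) + 5) / 2)
          = (t ^ 2 + u + ‖y'‖ ^ 2) ^ (-(5:ℝ)/2) * (t ^ 2 + u + ‖y'‖ ^ 2) ^ (-(m:ℝ)/2) := by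
        rw [← Real.rpow_add hB]; ring_nf
      have hpow : (t ^ 2 + u + ‖y'‖ ^ 2) ^ (-((m : ℝ) + 5) / 2)
          ≤ (t ^ 2 + u) ^ (-(5:ℝ)/2) * u ^ (-(m:ℝ)/2) := by
        rw [hsplit]
        apply mul_le_mul
        · exact Real.rpow_le_rpow_of_nonpos (by positivity)
            (by nlinarith [sq_nonneg ‖y'‖]) (by norm_num)
        · exact Real.rpow_le_rpow_of_nonpos hu0
            (by nlinarith [sq_nonneg t, sq_nonneg ‖y'‖])
            (by rw [neg_div]; exact neg_nonpos.mpr (by positivity))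
        · positivity
        · positivity
      rw [hexp, Real.exp_add]
      calc (t / x₁ ^ 2) * (t ^ 2 + u + ‖y'‖ ^ 2) ^ (-((m : ℝ) + 5) / 2)
            * (Real.exp (-(c * t ^ 2 / u)) * Real.exp (-(c / u) * ‖y'‖ ^ 2))
          ≤ (t / x₁ ^ 2) * ((t ^ 2 + u) ^ (-(5:ℝ)/2) * u ^ (-(m:ℝ)/2))
            * (Real.exp (-(c * t ^ 2 / u)) * Real.exp (-(c / u) * ‖y'‖ ^ 2)) := by
            apply mul_le_mul_of_nonneg_right (mul_le_mul_of_nonneg_left hpow (by positivity))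
            positivity
        _ = A * Real.exp (-(c / u) * ‖y'‖ ^ 2) := by rw [hA]; ring
    calc (∫⁻ y' : EuclideanSpace ℝ (Fin m), ENNReal.ofReal (F (y₁, y')))
        ≤ ∫⁻ y' : EuclideanSpace ℝ (Fin m),
            ENNReal.ofReal (A * Real.exp (-(c / u) * ‖y'‖ ^ 2)) :=
          lintegral_mono fun y' => ENNReal.ofReal_le_ofReal (hptw y')
      _ = ENNReal.ofReal A
            * ∫⁻ y' : EuclideanSpace ℝ (Fin m),
                ENNReal.ofReal (Real.exp (-(c / u) * ‖y'‖ ^ 2)) := by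
          simp_rw [ENNReal.ofReal_mul hA0]
          rw [lintegral_const_mul' _ _ ENNReal.ofReal_ne_top]
      _ = ENNReal.ofReal A * ENNReal.ofReal ((π / (c / u)) ^ ((m : ℝ) / 2)) := by
          rw [gauss_lint m (div_pos hc hu0)]
      _ = ENNReal.ofReal (K * (t / x₁ ^ 2) * (t ^ 2 + u) ^ (-(5:ℝ)/2)
            * Real.exp (-(c * t ^ 2 / u))) := by
          rw [← ENNReal.ofReal_mul hA0]
          congr 1
          have h1' : π / (c / u) = (π / c) * u := by field_simp
          rw [h1', Real.mul_rpow (by positivity) hu0.le]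
          have h2' : u ^ (-(m:ℝ)/2) * u ^ ((m:ℝ)/2) = 1 := by
            rw [← Real.rpow_add hu0, show (-(m:ℝ)/2 + (m:ℝ)/2) = 0 by ring, Real.rpow_zero]
          rw [hA, hK]
          linear_combination ((t / x₁ ^ 2) * (t ^ 2 + u) ^ (-(5:ℝ)/2)
            * Real.exp (-(c * t ^ 2 / u)) * (π / c) ^ ((m:ℝ)/2)) * h2'
  -- outer bound
  set G : ℝ → ENNReal := (Set.Ico (x₁/2) x₁).indicator fun y₁ =>
    ENNReal.ofReal (K * (t / x₁ ^ 2) * (t ^ 2 + (x₁ - y₁) / x₁) ^ (-(5:ℝ)/2)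
      * Real.exp (-(c * t ^ 2 / ((x₁ - y₁) / x₁)))) with hG
  have step1 : ∫⁻ y₁ : ℝ, ∫⁻ y' : EuclideanSpace ℝ (Fin m), ENNReal.ofReal (F (y₁, y'))
      ≤ ∫⁻ y₁ : ℝ, G y₁ := by
    apply lintegral_mono
    intro y₁
    by_cases hy₁ : y₁ ∈ Set.Ico (x₁/2) x₁
    · rw [hG]
      simp only [Set.indicator_of_mem hy₁]
      exact hinner y₁ hy₁
    · have : ∀ y' : EuclideanSpace ℝ (Fin m), F (y₁, y') = 0 := by
        intro y'
        rw [hF]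
        dsimp only
        rw [if_neg (by simpa [Set.mem_Ico] using hy₁)]
      simp only [this, ENNReal.ofReal_zero, lintegral_zero, hG,
        Set.indicator_of_notMem hy₁]
      exact le_rfl
  refine le_trans step1 ?_
  rw [hG, lintegral_indicator measurableSet_Ico]
  set a := x₁ * (1 - t^2) with ha
  have hax : a < x₁ := by rw [ha]; nlinarith [mul_pos hx (pow_pos ht 2)]
  have hsub : Set.Ico (x₁/2) x₁ ⊆ Set.Ico (x₁/2) a ∪ Set.Ico a x₁ := by
    intro y hy
    rcases lt_or_ge y a with h | h
    · exact Or.inl ⟨hy.1, h⟩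
    · exact Or.inr ⟨h, hy.2⟩
  refine le_trans (lintegral_mono_set hsub) ?_
  refine le_trans (lintegral_union_le _ _ _) ?_
  -- piece A
  have hpA : ∫⁻ y₁ in Set.Ico (x₁/2) a,
      ENNReal.ofReal (K * (t / x₁ ^ 2) * (t ^ 2 + (x₁ - y₁) / x₁) ^ (-(5:ℝ)/2)
        * Real.exp (-(c * t ^ 2 / ((x₁ - y₁) / x₁))))
      ≤ ENNReal.ofReal (K * (t / x₁ ^ 2)) * ENNReal.ofReal ((2/3) * x₁ * t ^ (-(3:ℝ))) := by
    have hbd : ∀ y₁ ∈ Set.Ico (x₁/2) a,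
        ENNReal.ofReal (K * (t / x₁ ^ 2) * (t ^ 2 + (x₁ - y₁) / x₁) ^ (-(5:ℝ)/2)
          * Real.exp (-(c * t ^ 2 / ((x₁ - y₁) / x₁))))
        ≤ ENNReal.ofReal (K * (t / x₁ ^ 2)) * ENNReal.ofReal (((x₁ - y₁) / x₁) ^ (-(5:ℝ)/2)) := by
      intro y₁ hy₁
      have hxy : 0 < x₁ - y₁ := by linarith [hy₁.2, hax]
      have hu0 : 0 < (x₁ - y₁) / x₁ := div_pos hxy hx
      rw [← ENNReal.ofReal_mul (by positivity)]
      apply ENNReal.ofReal_le_ofReal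
      calc K * (t / x₁ ^ 2) * (t ^ 2 + (x₁ - y₁) / x₁) ^ (-(5:ℝ)/2)
            * Real.exp (-(c * t ^ 2 / ((x₁ - y₁) / x₁)))
          ≤ K * (t / x₁ ^ 2) * (t ^ 2 + (x₁ - y₁) / x₁) ^ (-(5:ℝ)/2) * 1 := by
            apply mul_le_mul_of_nonneg_left _
              (mul_nonneg (by positivity) (Real.rpow_nonneg (by nlinarith [hu0, sq_nonneg t]) _))
            exact Real.exp_le_one_iff.mpr (neg_nonpos.mpr (div_nonneg (by positivity) hu0.le))
        _ ≤ K * (t / x₁ ^ 2) * ((x₁ - y₁) / x₁) ^ (-(5:ℝ)/2) * 1 := by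
            apply mul_le_mul_of_nonneg_right _ zero_le_one
            apply mul_le_mul_of_nonneg_left _ (by positivity)
            exact Real.rpow_le_rpow_of_nonpos hu0
              (le_add_of_nonneg_left (by positivity)) (by norm_num)
        _ = K * (t / x₁ ^ 2) * (((x₁ - y₁) / x₁) ^ (-(5:ℝ)/2)) := by ring
    calc ∫⁻ y₁ in Set.Ico (x₁/2) a, ENNReal.ofReal (K * (t / x₁ ^ 2)
            * (t ^ 2 + (x₁ - y₁) / x₁) ^ (-(5:ℝ)/2)
            * Real.exp (-(c * t ^ 2 / ((x₁ - y₁) / x₁))))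
        ≤ ∫⁻ y₁ in Set.Ico (x₁/2) a, ENNReal.ofReal (K * (t / x₁ ^ 2))
            * ENNReal.ofReal (((x₁ - y₁) / x₁) ^ (-(5:ℝ)/2)) := by
          apply setLIntegral_mono' measurableSet_Ico hbd
      _ = ENNReal.ofReal (K * (t / x₁ ^ 2))
            * ∫⁻ y₁ in Set.Ico (x₁/2) a, ENNReal.ofReal (((x₁ - y₁) / x₁) ^ (-(5:ℝ)/2)) := by
          rw [lintegral_const_mul' _ _ ENNReal.ofReal_ne_top]
      _ ≤ ENNReal.ofReal (K * (t / x₁ ^ 2)) * ENNReal.ofReal ((2/3) * x₁ * t ^ (-(3:ℝ))) := by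
          exact mul_le_mul_right (piece1 hx ht) _
  -- piece B
  have hpB : ∫⁻ y₁ in Set.Ico a x₁,
      ENNReal.ofReal (K * (t / x₁ ^ 2) * (t ^ 2 + (x₁ - y₁) / x₁) ^ (-(5:ℝ)/2)
        * Real.exp (-(c * t ^ 2 / ((x₁ - y₁) / x₁))))
      ≤ ENNReal.ofReal (K * (t / x₁ ^ 2) * (t ^ 2) ^ (-(5:ℝ)/2)) * ENNReal.ofReal (x₁ * t ^ 2) := by
    have hbd : ∀ y₁ ∈ Set.Ico a x₁,
        ENNReal.ofReal (K * (t / x₁ ^ 2) * (t ^ 2 + (x₁ - y₁) / x₁) ^ (-(5:ℝ)/2)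
          * Real.exp (-(c * t ^ 2 / ((x₁ - y₁) / x₁))))
        ≤ ENNReal.ofReal (K * (t / x₁ ^ 2) * (t ^ 2) ^ (-(5:ℝ)/2)) := by
      intro y₁ hy₁
      have hxy : 0 < x₁ - y₁ := by linarith [hy₁.2]
      have hu0 : 0 < (x₁ - y₁) / x₁ := div_pos hxy hx
      apply ENNReal.ofReal_le_ofReal
      calc K * (t / x₁ ^ 2) * (t ^ 2 + (x₁ - y₁) / x₁) ^ (-(5:ℝ)/2)
            * Real.exp (-(c * t ^ 2 / ((x₁ - y₁) / x₁)))
          ≤ K * (t / x₁ ^ 2) * (t ^ 2 + (x₁ - y₁) / x₁) ^ (-(5:ℝ)/2) * 1 := by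
            apply mul_le_mul_of_nonneg_left _
              (mul_nonneg (by positivity) (Real.rpow_nonneg (by nlinarith [hu0, sq_nonneg t]) _))
            exact Real.exp_le_one_iff.mpr (neg_nonpos.mpr (div_nonneg (by positivity) hu0.le))
        _ ≤ K * (t / x₁ ^ 2) * (t ^ 2) ^ (-(5:ℝ)/2) * 1 := by
            apply mul_le_mul_of_nonneg_right _ zero_le_one
            apply mul_le_mul_of_nonneg_left _ (by positivity)
            exact Real.rpow_le_rpow_of_nonpos (by positivity)
              (by nlinarith [hu0]) (by norm_num)
        _ = K * (t / x₁ ^ 2) * (t ^ 2) ^ (-(5:ℝ)/2) := by ring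
    calc ∫⁻ y₁ in Set.Ico a x₁, ENNReal.ofReal (K * (t / x₁ ^ 2)
            * (t ^ 2 + (x₁ - y₁) / x₁) ^ (-(5:ℝ)/2)
            * Real.exp (-(c * t ^ 2 / ((x₁ - y₁) / x₁))))
        ≤ ∫⁻ _ in Set.Ico a x₁, ENNReal.ofReal (K * (t / x₁ ^ 2) * (t ^ 2) ^ (-(5:ℝ)/2)) := by
          apply setLIntegral_mono' measurableSet_Ico hbd
      _ = ENNReal.ofReal (K * (t / x₁ ^ 2) * (t ^ 2) ^ (-(5:ℝ)/2)) * volume (Set.Ico a x₁) := by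
          rw [setLIntegral_const]
      _ = ENNReal.ofReal (K * (t / x₁ ^ 2) * (t ^ 2) ^ (-(5:ℝ)/2)) * ENNReal.ofReal (x₁ * t ^ 2) := by
          rw [Real.volume_Ico]
          congr 1
          rw [ha]; ring_nf
  refine le_trans (add_le_add hpA hpB) ?_
  rw [← ENNReal.ofReal_mul (by positivity), ← ENNReal.ofReal_mul (by positivity),
    ← ENNReal.ofReal_add (by positivity) (by positivity)]
  apply ENNReal.ofReal_le_ofReal
  -- final real arithmetic
  have hr3 : t ^ (-(3:ℝ)) = (t ^ 3)⁻¹ := by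
    rw [show (-(3:ℝ)) = -((3:ℕ):ℝ) by norm_num, Real.rpow_neg ht.le, Real.rpow_natCast]
  have hr2 : t ^ (-2:ℝ) = (t ^ 2)⁻¹ := by
    rw [show (-(2:ℝ)) = -((2:ℕ):ℝ) by norm_num, Real.rpow_neg ht.le, Real.rpow_natCast]
  have hr5 : (t ^ 2) ^ (-(5:ℝ)/2) = (t ^ 5)⁻¹ := by
    rw [← Real.rpow_natCast t 2, ← Real.rpow_mul ht.le,
      show ((2:ℕ):ℝ) * (-(5:ℝ)/2) = -((5:ℕ):ℝ) by norm_num, Real.rpow_neg ht.le,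
      Real.rpow_natCast]
  rw [hr3, hr2, hr5]
  have heq : K * (t / x₁ ^ 2) * ((2/3) * x₁ * (t ^ 3)⁻¹)
      + K * (t / x₁ ^ 2) * (t ^ 5)⁻¹ * (x₁ * t ^ 2)
      = (5/3) * (K * (t ^ 2)⁻¹ * x₁⁻¹) := by
    field_simp
    ring
  rw [heq]
  have hpos : 0 < K * (t ^ 2)⁻¹ * x₁⁻¹ := by positivity
  nlinarith [hpos]
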